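/- Let μ > 0, ν, ξ : [0,∞) → [0,∞), with ν(t+σ) ≤ e^{-μt} ν(σ) + C_μ sup_{σ<s<t+σ} ∫_s^{s+1} ξ(τ)dτ for all t>0, σ≥0, where C_μ > 0. Assume sup_{t>0} ∫_t^{t+1} ξ(τ)dτ ≤ C_R and ∫_t^{t+1} ξ(τ)dτ → 0 as t → ∞. Then ν(t) → 0 as t → ∞. -/

import Mathlib

open Real Set MeasureTheory Filter Topology intervalIntegral

/-- if `ν(t+σ) ≤ e^{-μt} ν(σ) + C_μ sup_{σ<s<t+σ} ∫_s^{s+1} ξ` for all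
`t > 0, σ ≥ 0`, the unit averages of `ξ` are uniformly bounded and tend to `0` at
infinity, then `ν(t) → 0` as `t → ∞`. -/
theorem stmt8 (μ Cμ CR : ℝ) (hμ : 0 < μ) (hCμ : 0 < Cμ) (ν ξ : ℝ → ℝ)
    (hν : ∀ t, 0 ≤ t → 0 ≤ ν t) (hξ : ∀ t, 0 ≤ t → 0 ≤ ξ t)
    (hξint : ∀ a b : ℝ, IntervalIntegrable ξ MeasureTheory.volume a b)
    (hineq : ∀ t σ : ℝ, 0 < t → 0 ≤ σ →
      ν (t + σ) ≤ Real.exp (-μ * t) * ν σ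
        + Cμ * sSup ((fun s => ∫ τ in s..(s + 1), ξ τ) '' Set.Ioo σ (t + σ)))
    (hbd : ∀ t : ℝ, 0 < t → (∫ τ in t..(t + 1), ξ τ) ≤ CR)
    (hto0 : Filter.Tendsto (fun t => ∫ τ in t..(t + 1), ξ τ) Filter.atTop (𝓝 0)) :
    Filter.Tendsto ν Filter.atTop (𝓝 0) := by
  rw [Metric.tendsto_atTop]
  intro ε hε
  have hε2 : (0:ℝ) < ε / (2 * Cμ) := by positivity
  obtain ⟨T₀, hT₀⟩ := (Metric.tendsto_atTop.1 hto0) (ε / (2 * Cμ)) hε2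
  set T := max T₀ 0 with hTdef
  have hT0 : (0:ℝ) ≤ T := le_max_right _ _
  have hTs : ∀ s, T < s → (∫ τ in s..(s + 1), ξ τ) ≤ ε / (2 * Cμ) := by
    intro s hs
    have h := hT₀ s (le_of_lt (lt_of_le_of_lt (le_max_left _ _) hs))
    rw [Real.dist_eq, sub_zero] at h
    exact le_of_lt (lt_of_le_of_lt (le_abs_self _) h)
  have hexp : Tendsto (fun t => Real.exp (-μ * t) * ν T) atTop (𝓝 0) := by
    have h1 : Tendsto (fun t : ℝ => Real.exp (-μ * t)) atTop (𝓝 0) := by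
      have h2 : Tendsto (fun t : ℝ => μ * t) atTop atTop :=
        Tendsto.const_mul_atTop hμ tendsto_id
      refine Tendsto.congr (fun t => ?_) (Real.tendsto_exp_neg_atTop_nhds_zero.comp h2)
      simp [Function.comp, neg_mul]
    simpa using h1.mul_const (ν T)
  obtain ⟨t₁, ht₁⟩ := (Metric.tendsto_atTop.1 hexp) (ε / 2) (by positivity)
  refine ⟨T + max t₁ 1, fun u hu => ?_⟩
  have htpos : 0 < u - T := by
    have : (1:ℝ) ≤ max t₁ 1 := le_max_right _ _
    linarith
  have ht1 : t₁ ≤ u - T := by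
    have : t₁ ≤ max t₁ 1 := le_max_left _ _
    linarith
  have key := hineq (u - T) T htpos hT0
  rw [sub_add_cancel] at key
  have hsup : sSup ((fun s => ∫ τ in s..(s + 1), ξ τ) '' Set.Ioo T u) ≤ ε / (2 * Cμ) := by
    apply Real.sSup_le _ hε2.le
    rintro x ⟨s, hs, rfl⟩
    exact hTs s hs.1
  have hexpb : Real.exp (-μ * (u - T)) * ν T < ε / 2 := by
    have h := ht₁ (u - T) ht1
    rw [Real.dist_eq, sub_zero] at h
    exact lt_of_le_of_lt (le_abs_self _) h
  have hCsup : Cμ * sSup ((fun s => ∫ τ in s..(s + 1), ξ τ) '' Set.Ioo T u) ≤ ε / 2 := by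
    calc Cμ * sSup ((fun s => ∫ τ in s..(s + 1), ξ τ) '' Set.Ioo T u)
        ≤ Cμ * (ε / (2 * Cμ)) := by exact mul_le_mul_of_nonneg_left hsup hCμ.le
      _ = ε / 2 := by field_simp
  have hupos : (0:ℝ) ≤ u := by linarith
  rw [Real.dist_eq, sub_zero, abs_of_nonneg (hν u hupos)]
  linarith
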